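/- Let G be an abelian topological group and let S and T be measure-preserving actions of G on probability spaces (X, μ) and (Y, ν), with Koopman representations U_S on L²(X, μ) and U_T on L²(Y, ν), and assume the maps g ↦ U_S(g)f and g ↦ U_T(g)h are continuous for all f ∈ L²(X, μ), h ∈ L²(Y, ν). Suppose there exist a sequence (g_n)_{n∈ℕ} in G and an at most countable subset {d_i : i ∈ J} of G whose generated subgroup is dense in G, and for each i ∈ J a subsequence (g_{n_k(i)})_{k∈ℕ} of (g_n), such that U_S(g_n) → I in the strong operator topology as n → ∞, and U_T(g_{n_k(i)}) → U_T(d_i) in the strong operator topology as k → ∞, for each i ∈ J. If φ ∈ L²(X, μ) is a cyclic vector for U_S and ψ ∈ L²(Y, ν) is a cyclic vector for U_T, then the function (x, y) ↦ φ(x)ψ(y) is a cyclic vector for the Koopman representation of the product action S × T of G on (X × Y, μ ⊗ ν), where (S × T)_g(x, y) = (S_g x, T_g y). -/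

import Mathlib

open Filter Topology MeasureTheory

set_option linter.unusedSectionVars false
set_option maxHeartbeats 1000000

open scoped ENNReal InnerProductSpace ComplexConjugate
set_option linter.unusedSectionVars false

namespace Stmt2Aux

section Tensor

variable {X Y : Type*} [MeasurableSpace X] [MeasurableSpace Y] (μ : Measure X) (ν : Measure Y)
  [IsProbabilityMeasure μ] [IsProbabilityMeasure ν]

lemma eLpNorm_tensor (f : X → ℂ) (h : Y → ℂ) (hf : AEStronglyMeasurable f μ)
    (hh : AEStronglyMeasurable h ν) :
    eLpNorm (fun p : X × Y => f p.1 * h p.2) 2 (μ.prod ν) = eLpNorm f 2 μ * eLpNorm h 2 ν := by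
  rw [eLpNorm_eq_lintegral_rpow_enorm_toReal two_ne_zero ENNReal.ofNat_ne_top,
      eLpNorm_eq_lintegral_rpow_enorm_toReal two_ne_zero ENNReal.ofNat_ne_top,
      eLpNorm_eq_lintegral_rpow_enorm_toReal two_ne_zero ENNReal.ofNat_ne_top]
  have h1 : ∫⁻ p, ‖f p.1 * h p.2‖ₑ ^ (2 : ℝ≥0∞).toReal ∂(μ.prod ν)
      = (∫⁻ x, ‖f x‖ₑ ^ (2 : ℝ≥0∞).toReal ∂μ)
        * ∫⁻ y, ‖h y‖ₑ ^ (2 : ℝ≥0∞).toReal ∂ν := by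
    rw [← lintegral_prod_mul (hf.enorm.pow_const _) (hh.enorm.pow_const _)]
    congr 1
    ext p
    rw [enorm_mul, ENNReal.mul_rpow_of_nonneg _ _ (by positivity)]
  rw [h1, ENNReal.mul_rpow_of_nonneg _ _ (by positivity)]

variable {μ ν}

lemma tensor_aesm (f : Lp ℂ 2 μ) (h : Lp ℂ 2 ν) :
    AEStronglyMeasurable (fun p : X × Y => f p.1 * h p.2) (μ.prod ν) :=
  ((Lp.aestronglyMeasurable f).comp_quasiMeasurePreserving
      Measure.quasiMeasurePreserving_fst).mul
    ((Lp.aestronglyMeasurable h).comp_quasiMeasurePreserving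
      Measure.quasiMeasurePreserving_snd)

lemma tensor_memLp (f : Lp ℂ 2 μ) (h : Lp ℂ 2 ν) :
    MemLp (fun p : X × Y => f p.1 * h p.2) 2 (μ.prod ν) := by
  refine ⟨tensor_aesm f h, ?_⟩
  rw [eLpNorm_tensor μ ν f h (Lp.aestronglyMeasurable f) (Lp.aestronglyMeasurable h)]
  exact ENNReal.mul_lt_top (Lp.eLpNorm_lt_top f) (Lp.eLpNorm_lt_top h)

/-- The elementary tensor of two `L²` functions. -/
noncomputable def tensorLp (f : Lp ℂ 2 μ) (h : Lp ℂ 2 ν) : Lp ℂ 2 (μ.prod ν) :=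
  (tensor_memLp f h).toLp _

lemma tensorLp_coeFn (f : Lp ℂ 2 μ) (h : Lp ℂ 2 ν) :
    ⇑(tensorLp f h) =ᵐ[μ.prod ν] fun p : X × Y => f p.1 * h p.2 :=
  (tensor_memLp f h).coeFn_toLp

lemma norm_tensorLp (f : Lp ℂ 2 μ) (h : Lp ℂ 2 ν) : ‖tensorLp f h‖ = ‖f‖ * ‖h‖ := by
  rw [Lp.norm_def, Lp.norm_def, Lp.norm_def, eLpNorm_congr_ae (tensorLp_coeFn f h),
    eLpNorm_tensor μ ν f h (Lp.aestronglyMeasurable f) (Lp.aestronglyMeasurable h),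
    ENNReal.toReal_mul]


lemma tensorLp_add_left (f f' : Lp ℂ 2 μ) (h : Lp ℂ 2 ν) :
    tensorLp (f + f') h = tensorLp f h + tensorLp f' h := by
  apply Lp.ext
  filter_upwards [tensorLp_coeFn (f + f') h, Lp.coeFn_add (tensorLp f h) (tensorLp f' h),
    tensorLp_coeFn f h, tensorLp_coeFn f' h,
    Measure.quasiMeasurePreserving_fst.ae_eq_comp (Lp.coeFn_add f f')] with p h0 h1 h2 h3 h4
  simp only [Function.comp_apply, Pi.add_apply] at *
  rw [h0, h1, h2, h3, h4]
  ring

lemma tensorLp_smul_left (c : ℂ) (f : Lp ℂ 2 μ) (h : Lp ℂ 2 ν) :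
    tensorLp (c • f) h = c • tensorLp f h := by
  apply Lp.ext
  filter_upwards [tensorLp_coeFn (c • f) h, Lp.coeFn_smul c (tensorLp f h),
    tensorLp_coeFn f h,
    Measure.quasiMeasurePreserving_fst.ae_eq_comp (Lp.coeFn_smul c f)] with p h0 h1 h2 h4
  simp only [Function.comp_apply, Pi.smul_apply, smul_eq_mul] at *
  rw [h0, h1, h2, h4]
  ring

lemma tensorLp_add_right (f : Lp ℂ 2 μ) (h h' : Lp ℂ 2 ν) :
    tensorLp f (h + h') = tensorLp f h + tensorLp f h' := by
  apply Lp.ext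
  filter_upwards [tensorLp_coeFn f (h + h'), Lp.coeFn_add (tensorLp f h) (tensorLp f h'),
    tensorLp_coeFn f h, tensorLp_coeFn f h',
    Measure.quasiMeasurePreserving_snd.ae_eq_comp (Lp.coeFn_add h h')] with p h0 h1 h2 h3 h4
  simp only [Function.comp_apply, Pi.add_apply] at *
  rw [h0, h1, h2, h3, h4]
  ring

lemma tensorLp_smul_right (c : ℂ) (f : Lp ℂ 2 μ) (h : Lp ℂ 2 ν) :
    tensorLp f (c • h) = c • tensorLp f h := by
  apply Lp.ext
  filter_upwards [tensorLp_coeFn f (c • h), Lp.coeFn_smul c (tensorLp f h),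
    tensorLp_coeFn f h,
    Measure.quasiMeasurePreserving_snd.ae_eq_comp (Lp.coeFn_smul c h)] with p h0 h1 h2 h4
  simp only [Function.comp_apply, Pi.smul_apply, smul_eq_mul] at *
  rw [h0, h1, h2, h4]
  ring

variable (μ ν) in
/-- The elementary tensor as a continuous bilinear map. -/
noncomputable def tensorCLM : Lp ℂ 2 μ →L[ℂ] Lp ℂ 2 ν →L[ℂ] Lp ℂ 2 (μ.prod ν) :=
  LinearMap.mkContinuous₂
    (LinearMap.mk₂ ℂ tensorLp tensorLp_add_left tensorLp_smul_left tensorLp_add_right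
      tensorLp_smul_right) 1
    (fun f h => by rw [LinearMap.mk₂_apply, norm_tensorLp, one_mul])

@[simp] lemma tensorCLM_apply (f : Lp ℂ 2 μ) (h : Lp ℂ 2 ν) :
    tensorCLM μ ν f h = tensorLp f h := rfl


lemma tensorLp_total (F : Lp ℂ 2 (μ.prod ν))
    (hF : ∀ (f : Lp ℂ 2 μ) (h : Lp ℂ 2 ν), (inner ℂ (tensorLp f h) F : ℂ) = 0) : F = 0 := by
  have hFi : Integrable (⇑F) (μ.prod ν) := (Lp.memLp F).integrable one_le_two
  have key : ∀ (A : Set X) (B : Set Y), MeasurableSet A → MeasurableSet B →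
      ∫ p in A ×ˢ B, F p ∂(μ.prod ν) = 0 := by
    intro A B hA hB
    have h0 := hF (indicatorConstLp 2 hA (measure_ne_top μ A) (1 : ℂ))
      (indicatorConstLp 2 hB (measure_ne_top ν B) (1 : ℂ))
    rw [L2.inner_def] at h0
    have hcoe : ⇑(tensorLp (indicatorConstLp 2 hA (measure_ne_top μ A) (1 : ℂ))
        (indicatorConstLp 2 hB (measure_ne_top ν B) (1 : ℂ)))
        =ᵐ[μ.prod ν] (A ×ˢ B).indicator fun _ => (1 : ℂ) := by
      filter_upwards [tensorLp_coeFn (indicatorConstLp 2 hA (measure_ne_top μ A) (1 : ℂ))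
          (indicatorConstLp 2 hB (measure_ne_top ν B) (1 : ℂ)),
        Measure.quasiMeasurePreserving_fst.ae_eq_comp
          (indicatorConstLp_coeFn (p := 2) (hs := hA) (hμs := measure_ne_top μ A) (c := (1 : ℂ))),
        Measure.quasiMeasurePreserving_snd.ae_eq_comp
          (indicatorConstLp_coeFn (p := 2) (hs := hB) (hμs := measure_ne_top ν B) (c := (1 : ℂ)))]
        with p h1 h2 h3
      simp only [Function.comp_apply] at h2 h3
      rw [h1, h2, h3]
      have := Set.indicator_prod_one (M₀ := ℂ) (s := A) (t := B) (i := p.1) (j := p.2)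
      simpa [Pi.one_def] using this.symm
    rw [← integral_indicator (hA.prod hB), ← h0]
    refine integral_congr_ae ?_
    filter_upwards [hcoe] with p hp
    rw [hp]
    by_cases hmem : p ∈ A ×ˢ B <;>
      simp [RCLike.inner_apply, Set.indicator_apply, hmem]
  have h_all : ∀ s : Set (X × Y), MeasurableSet s → ∫ p in s, F p ∂(μ.prod ν) = 0 := by
    intro s hs
    refine MeasurableSpace.induction_on_inter (C := fun s _ => ∫ p in s, F p ∂(μ.prod ν) = 0) generateFrom_prod.symm isPiSystem_prod ?_ ?_ ?_ ?_ s hs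
    · simp
    · rintro _ ⟨A, hA, B, hB, rfl⟩
      exact key A B hA hB
    · intro t ht hC
      have htot : ∫ p, F p ∂(μ.prod ν) = 0 := by
        have := key Set.univ Set.univ MeasurableSet.univ MeasurableSet.univ
        rwa [Set.univ_prod_univ, Measure.restrict_univ] at this
      have := integral_add_compl ht hFi
      rw [hC, zero_add, htot] at this
      exact this
    · intro f hdisj hmeas hC
      rw [integral_iUnion hmeas hdisj hFi.integrableOn]
      simp [hC]
  have hF0 : ⇑F =ᵐ[μ.prod ν] 0 :=
    ae_eq_zero_of_forall_setIntegral_eq_of_sigmaFinite (fun s _ _ => hFi.integrableOn)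
      (fun s hs _ => h_all s hs)
  exact Lp.ext (hF0.trans (Lp.coeFn_zero ℂ 2 (μ.prod ν)).symm)

end Tensor

section Koopman

variable {G : Type*} [AddCommGroup G] {Z : Type*} [MeasurableSpace Z] {ρ : Measure Z}
  [IsProbabilityMeasure ρ]
  {R : G → Z ≃ᵐ Z} {A : G → (Lp ℂ 2 ρ →L[ℂ] Lp ℂ 2 ρ)}

lemma koopman_comp (hR : ∀ g g' (z : Z), R (g + g') z = R g (R g' z))
    (hRm : ∀ g, MeasurePreserving (R g) ρ ρ)
    (hA : ∀ g (f : Lp ℂ 2 ρ), ⇑(A g f) =ᵐ[ρ] fun z => f (R (-g) z)) (g g' : G) (f : Lp ℂ 2 ρ) :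
    A g (A g' f) = A (g + g') f := by
  apply Lp.ext
  have h2 := (hRm (-g)).quasiMeasurePreserving.ae_eq_comp (hA g' f)
  refine (hA g (A g' f)).trans (EventuallyEq.trans ?_ (hA (g + g') f).symm)
  filter_upwards [h2] with z hz
  simp only [Function.comp_apply] at hz
  rw [hz, ← hR (-g') (-g) z, neg_add_rev]

lemma koopman_norm (hRm : ∀ g, MeasurePreserving (R g) ρ ρ)
    (hA : ∀ g (f : Lp ℂ 2 ρ), ⇑(A g f) =ᵐ[ρ] fun z => f (R (-g) z)) (g : G) (f : Lp ℂ 2 ρ) :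
    ‖A g f‖ = ‖f‖ := by
  rw [Lp.norm_def, Lp.norm_def, eLpNorm_congr_ae (hA g f)]
  congr 1
  exact eLpNorm_comp_measurePreserving (Lp.aestronglyMeasurable f) (hRm (-g))

lemma koopman_zero (hR : ∀ g g' (z : Z), R (g + g') z = R g (R g' z))
    (hA : ∀ g (f : Lp ℂ 2 ρ), ⇑(A g f) =ᵐ[ρ] fun z => f (R (-g) z)) (f : Lp ℂ 2 ρ) :
    A 0 f = f := by
  have hz : ∀ z : Z, R 0 z = z := fun z => (R 0).injective (by rw [← hR 0 0 z, zero_add])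
  apply Lp.ext
  refine (hA 0 f).trans ?_
  filter_upwards with z
  rw [neg_zero, hz]

end Koopman

end Stmt2Aux

open Stmt2Aux in
/-- Lemma 2.3(1) for Koopman representations: if `U(g_n) → I` strongly, and along
suitable subsequences `V(g_{n_k(i)}) → V(d_i)` strongly for a countable family `(d_i)`
generating a dense subgroup of the abelian topological group `G`, then the product of
cyclic vectors `φ ⊗ ψ` is a cyclic vector for the Koopman representation of the
product action `S × T`. -/
theorem stmt2 {G : Type*} [AddCommGroup G] [TopologicalSpace G] [IsTopologicalAddGroup G]
    {X Y : Type*} [MeasurableSpace X] [MeasurableSpace Y]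
    (μ : Measure X) (ν : Measure Y) [IsProbabilityMeasure μ] [IsProbabilityMeasure ν]
    (S : G → X ≃ᵐ X) (T : G → Y ≃ᵐ Y)
    (hS : ∀ g g' : G, S (g + g') = (S g').trans (S g))
    (hT : ∀ g g' : G, T (g + g') = (T g').trans (T g))
    (hSm : ∀ g, MeasurePreserving (S g) μ μ)
    (hTm : ∀ g, MeasurePreserving (T g) ν ν)
    (U : G → (Lp ℂ 2 μ →L[ℂ] Lp ℂ 2 μ))
    (V : G → (Lp ℂ 2 ν →L[ℂ] Lp ℂ 2 ν))
    (W : G → (Lp ℂ 2 (μ.prod ν) →L[ℂ] Lp ℂ 2 (μ.prod ν)))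
    (hU : ∀ g (f : Lp ℂ 2 μ), ⇑(U g f) =ᵐ[μ] fun x => f (S (-g) x))
    (hV : ∀ g (h : Lp ℂ 2 ν), ⇑(V g h) =ᵐ[ν] fun y => h (T (-g) y))
    (hW : ∀ g (F : Lp ℂ 2 (μ.prod ν)),
      ⇑(W g F) =ᵐ[μ.prod ν] fun p => F (S (-g) p.1, T (-g) p.2))
    (hUc : ∀ f : Lp ℂ 2 μ, Continuous fun g => U g f)
    (hVc : ∀ h : Lp ℂ 2 ν, Continuous fun g => V g h)
    (gs : ℕ → G) {J : Type*} [Countable J] (d : J → G)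
    (hdense : Dense ((AddSubgroup.closure (Set.range d) : AddSubgroup G) : Set G))
    (n : J → ℕ → ℕ) (hn : ∀ i, StrictMono (n i))
    (hUI : ∀ f : Lp ℂ 2 μ, Tendsto (fun m => U (gs m) f) atTop (𝓝 f))
    (hVd : ∀ i, ∀ h : Lp ℂ 2 ν,
      Tendsto (fun k => V (gs (n i k)) h) atTop (𝓝 (V (d i) h)))
    (φ : Lp ℂ 2 μ) (ψ : Lp ℂ 2 ν)
    (hφ : (Submodule.span ℂ (Set.range fun g => U g φ)).topologicalClosure = ⊤)
    (hψ : (Submodule.span ℂ (Set.range fun g => V g ψ)).topologicalClosure = ⊤)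
    (Φ : Lp ℂ 2 (μ.prod ν))
    (hΦ : ⇑Φ =ᵐ[μ.prod ν] fun p => φ p.1 * ψ p.2) :
    (Submodule.span ℂ (Set.range fun g => W g Φ)).topologicalClosure = ⊤ := by
  classical
  -- pointwise group laws
  have hSx : ∀ g g' (x : X), S (g + g') x = S g (S g' x) := fun g g' x => by rw [hS g g']; rfl
  have hTy : ∀ g g' (y : Y), T (g + g') y = T g (T g' y) := fun g g' y => by rw [hT g g']; rfl
  set R : G → (X × Y) ≃ᵐ (X × Y) := fun g => (S g).prodCongr (T g) with hRdef
  have hRapp : ∀ g (z : X × Y), R g z = (S g z.1, T g z.2) := fun g z => rfl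
  have hRx : ∀ g g' (z : X × Y), R (g + g') z = R g (R g' z) := by
    intro g g' z
    simp only [hRapp]
    exact Prod.ext (hSx g g' z.1) (hTy g g' z.2)
  have hRm : ∀ g, MeasurePreserving (R g) (μ.prod ν) (μ.prod ν) := by
    intro g
    have h1 := (hSm g).prod (hTm g)
    have heq : ⇑(R g) = Prod.map (S g) (T g) := by
      funext z; cases z; rfl
    rwa [heq]
  have hWA : ∀ g (F : Lp ℂ 2 (μ.prod ν)),
      ⇑(W g F) =ᵐ[μ.prod ν] fun z => F (R (-g) z) := fun g F => hW g F
  -- operator group laws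
  have UU : ∀ g g' f, U g (U g' f) = U (g + g') f := koopman_comp hSx hSm hU
  have VV : ∀ g g' h, V g (V g' h) = V (g + g') h := koopman_comp hTy hTm hV
  have WW : ∀ g g' F, W g (W g' F) = W (g + g') F := koopman_comp hRx hRm hWA
  have U0 : ∀ f, U 0 f = f := koopman_zero hSx hU
  have V0 : ∀ h, V 0 h = h := koopman_zero hTy hV
  have nU : ∀ g f, ‖U g f‖ = ‖f‖ := koopman_norm hSm hU
  have nV : ∀ g h, ‖V g h‖ = ‖h‖ := koopman_norm hTm hV
  have Uinv : ∀ g f, U g (U (-g) f) = f := fun g f => by rw [UU, add_neg_cancel, U0]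
  have Vinv : ∀ g h, V g (V (-g) h) = h := fun g h => by rw [VV, add_neg_cancel, V0]
  -- the Koopman operator of the product acts on elementary tensors as the tensor of the
  -- Koopman operators
  have hWtensor : ∀ g (f : Lp ℂ 2 μ) (h : Lp ℂ 2 ν),
      W g (tensorLp f h) = tensorLp (U g f) (V g h) := by
    intro g f h
    apply Lp.ext
    have h2 : (fun z : X × Y => (tensorLp f h) (R (-g) z)) =ᵐ[μ.prod ν]
        fun z : X × Y => f (S (-g) z.1) * h (T (-g) z.2) := by
      have := (hRm (-g)).quasiMeasurePreserving.ae_eq_comp (tensorLp_coeFn f h)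
      filter_upwards [this] with z hz
      simpa only [Function.comp_apply, hRapp] using hz
    have h3 : (fun z : X × Y => f (S (-g) z.1) * h (T (-g) z.2)) =ᵐ[μ.prod ν]
        ⇑(tensorLp (U g f) (V g h)) := by
      filter_upwards [tensorLp_coeFn (U g f) (V g h),
        Measure.quasiMeasurePreserving_fst.ae_eq_comp (hU g f),
        Measure.quasiMeasurePreserving_snd.ae_eq_comp (hV g h)] with z h4 h5 h6
      simp only [Function.comp_apply] at h5 h6
      rw [h4, h5, h6]
    exact (hWA g (tensorLp f h)).trans (h2.trans h3)
  have hΦeq : Φ = tensorLp φ ψ := Lp.ext (hΦ.trans (tensorLp_coeFn φ ψ).symm)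
  set M := (Submodule.span ℂ (Set.range fun g => W g Φ)).topologicalClosure with hMdef
  have hMclosed : IsClosed (M : Set (Lp ℂ 2 (μ.prod ν))) :=
    Submodule.isClosed_topologicalClosure _
  have hgenM : ∀ g, W g Φ ∈ M :=
    fun g => Submodule.le_topologicalClosure _ (Submodule.subset_span ⟨g, rfl⟩)
  have hWM : ∀ g, ∀ x ∈ M, W g x ∈ M := by
    intro g x hx
    have hle : Submodule.span ℂ (Set.range fun g' => W g' Φ) ≤ M.comap (W g).toLinearMap := by
      rw [Submodule.span_le]
      rintro _ ⟨g', rfl⟩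
      rw [SetLike.mem_coe, Submodule.mem_comap, ContinuousLinearMap.coe_coe, WW]
      exact hgenM (g + g')
    have hclosed : IsClosed ((M.comap (W g).toLinearMap : Submodule ℂ _) : Set (Lp ℂ 2 (μ.prod ν))) :=
      by simpa only [Submodule.comap_coe, ContinuousLinearMap.coe_coe] using hMclosed.preimage (W g).continuous
    exact Submodule.mem_comap.mp (Submodule.topologicalClosure_minimal _ hle hclosed hx)
  -- strong convergence along subsequences, and of inverses
  have hUIsub : ∀ (i : J) (f : Lp ℂ 2 μ), Tendsto (fun k => U (gs (n i k)) f) atTop (𝓝 f) :=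
    fun i f => (hUI f).comp (hn i).tendsto_atTop
  have hUinv : ∀ (i : J) (f : Lp ℂ 2 μ),
      Tendsto (fun k => U (-(gs (n i k))) f) atTop (𝓝 f) := by
    intro i f
    rw [tendsto_iff_norm_sub_tendsto_zero]
    have heq : ∀ k, ‖U (-(gs (n i k))) f - f‖ = ‖f - U (gs (n i k)) f‖ := by
      intro k
      rw [← nU (gs (n i k)) (U (-(gs (n i k))) f - f), map_sub, Uinv]
    simp only [heq]
    have h2 : Tendsto (fun k => f - U (gs (n i k)) f) atTop (𝓝 (f - f)) :=
      tendsto_const_nhds.sub (hUIsub i f)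
    rw [sub_self] at h2
    simpa using h2.norm
  have hVinv : ∀ (i : J) (h : Lp ℂ 2 ν),
      Tendsto (fun k => V (-(gs (n i k))) h) atTop (𝓝 (V (-(d i)) h)) := by
    intro i h
    rw [tendsto_iff_norm_sub_tendsto_zero]
    have heq : ∀ k, ‖V (-(gs (n i k))) h - V (-(d i)) h‖
        = ‖h - V (gs (n i k)) (V (-(d i)) h)‖ := by
      intro k
      rw [← nV (gs (n i k)) (V (-(gs (n i k))) h - V (-(d i)) h), map_sub, Vinv]
    simp only [heq]
    have h2 : Tendsto (fun k => h - V (gs (n i k)) (V (-(d i)) h)) atTop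
        (𝓝 (h - V (d i) (V (-(d i)) h))) := tendsto_const_nhds.sub (hVd i _)
    rw [VV, add_neg_cancel, V0, sub_self] at h2
    simpa using h2.norm
  -- joint continuity of the tensor
  have htensor_cont : Continuous (fun q : Lp ℂ 2 μ × Lp ℂ 2 ν => tensorLp q.1 q.2) :=
    (tensorCLM μ ν).isBoundedBilinearMap.continuous
  -- the key invariance predicate
  let P : G → Prop := fun s => ∀ g : G, tensorLp (U g φ) (V (g + s) ψ) ∈ M
  have hP0 : P 0 := by
    intro g
    rw [add_zero]
    have := hgenM g
    rwa [hΦeq, hWtensor] at this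
  have hstep_pos : ∀ (i : J) (s : G), P s → P (s + d i) := by
    intro i s hs g
    have hmem : ∀ k, W (gs (n i k)) (tensorLp (U g φ) (V (g + s) ψ)) ∈ M :=
      fun k => hWM _ _ (hs g)
    have hconv : Tendsto (fun k => W (gs (n i k)) (tensorLp (U g φ) (V (g + s) ψ))) atTop
        (𝓝 (tensorLp (U g φ) (V (d i) (V (g + s) ψ)))) := by
      simp only [hWtensor]
      exact (htensor_cont.tendsto _).comp
        ((hUIsub i (U g φ)).prodMk_nhds (hVd i (V (g + s) ψ)))
    have hlim : tensorLp (U g φ) (V (d i) (V (g + s) ψ)) ∈ M :=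
      hMclosed.mem_of_tendsto hconv (Eventually.of_forall hmem)
    rwa [VV, show d i + (g + s) = g + (s + d i) by abel] at hlim
  have hstep_neg : ∀ (i : J) (s : G), P s → P (s - d i) := by
    intro i s hs g
    have hmem : ∀ k, W (-(gs (n i k))) (tensorLp (U g φ) (V (g + s) ψ)) ∈ M :=
      fun k => hWM _ _ (hs g)
    have hconv : Tendsto (fun k => W (-(gs (n i k))) (tensorLp (U g φ) (V (g + s) ψ))) atTop
        (𝓝 (tensorLp (U g φ) (V (-(d i)) (V (g + s) ψ)))) := by
      simp only [hWtensor]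
      exact (htensor_cont.tendsto _).comp
        ((hUinv i (U g φ)).prodMk_nhds (hVinv i (V (g + s) ψ)))
    have hlim : tensorLp (U g φ) (V (-(d i)) (V (g + s) ψ)) ∈ M :=
      hMclosed.mem_of_tendsto hconv (Eventually.of_forall hmem)
    rwa [VV, show -(d i) + (g + s) = g + (s - d i) by abel] at hlim
  -- the set of shifts satisfying `P` contains the subgroup generated by the `d i`
  let B : AddSubgroup G :=
    { carrier := {s | (∀ t, P t → P (t + s)) ∧ (∀ t, P t → P (t - s))}
      zero_mem' := ⟨fun t ht => by simpa using ht, fun t ht => by simpa using ht⟩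
      add_mem' := by
        rintro a b ⟨ha1, ha2⟩ ⟨hb1, hb2⟩
        refine ⟨fun t ht => ?_, fun t ht => ?_⟩
        · have := hb1 _ (ha1 t ht); rwa [add_assoc] at this
        · have := hb2 _ (ha2 t ht); rwa [sub_sub] at this
      neg_mem' := by
        rintro a ⟨ha1, ha2⟩
        refine ⟨fun t ht => ?_, fun t ht => ?_⟩
        · have := ha2 t ht; rwa [sub_eq_add_neg] at this
        · have := ha1 t ht; rwa [← sub_neg_eq_add] at this }
  have hdB : Set.range d ⊆ (B : Set G) := by
    rintro _ ⟨i, rfl⟩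
    exact ⟨fun t ht => hstep_pos i t ht, fun t ht => hstep_neg i t ht⟩
  have hHB : AddSubgroup.closure (Set.range d) ≤ B := (AddSubgroup.closure_le B).mpr hdB
  have hPH : ∀ s ∈ AddSubgroup.closure (Set.range d), P s := by
    intro s hs
    have := (hHB hs).1 0 hP0
    rwa [zero_add] at this
  have hAclosed : IsClosed {s : G | P s} := by
    have hset : {s : G | P s}
        = ⋂ g : G, (fun s => tensorLp (U g φ) (V (g + s) ψ)) ⁻¹' (M : Set _) := by
      ext s
      simp only [Set.mem_iInter, Set.mem_preimage, Set.mem_setOf_eq, SetLike.mem_coe]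
      exact Iff.rfl
    rw [hset]
    refine isClosed_iInter fun g => IsClosed.preimage ?_ hMclosed
    have hc1 : Continuous fun s : G => V (g + s) ψ :=
      (hVc ψ).comp (continuous_const.add continuous_id)
    exact (tensorCLM μ ν (U g φ)).continuous.comp hc1
  have hPall : ∀ s, P s := by
    intro s
    have hsub : ((AddSubgroup.closure (Set.range d) : AddSubgroup G) : Set G) ⊆ {s | P s} :=
      fun t ht => hPH t ht
    have h2 : (Set.univ : Set G) ⊆ {s | P s} := by
      rw [← hdense.closure_eq]
      exact hAclosed.closure_subset_iff.mpr hsub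
    exact h2 (Set.mem_univ s)
  have htensorM : ∀ g g' : G, tensorLp (U g φ) (V g' ψ) ∈ M := by
    intro g g'
    have := hPall (g' - g) g
    rwa [show g + (g' - g) = g' from by abel] at this
  -- endgame: the orthogonal complement of `M` is trivial
  have horth : ∀ F : Lp ℂ 2 (μ.prod ν), F ∈ Mᗮ → F = 0 := by
    intro F hF
    have h1 : ∀ (g : G) (h : Lp ℂ 2 ν), (inner ℂ F (tensorLp (U g φ) h) : ℂ) = 0 := by
      intro g
      have hker : Submodule.span ℂ (Set.range fun g' => V g' ψ)
          ≤ LinearMap.ker ((innerSL ℂ F).comp ((tensorCLM μ ν) (U g φ))).toLinearMap := by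
        rw [Submodule.span_le]
        rintro _ ⟨g', rfl⟩
        simp only [SetLike.mem_coe, LinearMap.mem_ker, ContinuousLinearMap.coe_coe, ContinuousLinearMap.coe_comp',
          Function.comp_apply, innerSL_apply_apply, tensorCLM_apply]
        exact (Submodule.mem_orthogonal' M F).mp hF _ (htensorM g g')
      have hclosed :=
        ContinuousLinearMap.isClosed_ker ((innerSL ℂ F).comp ((tensorCLM μ ν) (U g φ)))
      have htop := Submodule.topologicalClosure_minimal _ hker hclosed
      rw [hψ] at htop
      intro h
      have hh := htop (Submodule.mem_top (x := h))
      simpa using hh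
    have h2 : ∀ (f : Lp ℂ 2 μ) (h : Lp ℂ 2 ν), (inner ℂ F (tensorLp f h) : ℂ) = 0 := by
      intro f h
      have hker : Submodule.span ℂ (Set.range fun g => U g φ)
          ≤ LinearMap.ker ((innerSL ℂ F).comp ((tensorCLM μ ν).flip h)).toLinearMap := by
        rw [Submodule.span_le]
        rintro _ ⟨g, rfl⟩
        simpa using h1 g h
      have hclosed :=
        ContinuousLinearMap.isClosed_ker ((innerSL ℂ F).comp ((tensorCLM μ ν).flip h))
      have htop := Submodule.topologicalClosure_minimal _ hker hclosed
      rw [hφ] at htop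
      have hh := htop (Submodule.mem_top (x := f))
      simpa using hh
    refine tensorLp_total F fun f h => ?_
    rw [← inner_conj_symm, h2, map_zero]
  haveI : CompleteSpace M := hMclosed.completeSpace_coe
  have horthbot : Mᗮ = ⊥ := by
    rw [Submodule.eq_bot_iff]
    exact fun F hF => horth F hF
  have hMM : M = Mᗮᗮ := (Submodule.orthogonal_orthogonal M).symm
  rw [hMM, horthbot, Submodule.bot_orthogonal_eq_top]
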